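/- Let S be a set with a distinguished element 0 ∈ S. Then \bar{\bar{V}}_S is an immediate extension of V_S: for every g ∈ \bar{\bar{V}}_S with g ∉ V_S and every f ∈ V_S, there exists f' ∈ V_S with d(f', g) < d(f, g). -/
import Mathlib


open scoped NNRat

noncomputable section

/-- The positive rationals, as a subtype of `ℚ≥0`. -/
abbrev Qpos : Type := {q : ℚ≥0 // 0 < q}

/-- The support of `f : Qpos → S` relative to the distinguished element `s₀`. -/
def VSupp {S : Type*} (s₀ : S) (f : Qpos → S) : Set Qpos := {r | f r ≠ s₀}

/-- `V_S`: functions `ℚ^{>0} → S` with finite support. -/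
def VS (S : Type*) (s₀ : S) : Type _ := {f : Qpos → S // (VSupp s₀ f).Finite}

open Classical in
/-- The `ℚ≥0`-valued ultrametric: the greatest coordinate at which `f` and `g`
differ, and `0` if there is none (in particular `qdist f f = 0`). -/
def qdist {S : Type*} (f g : Qpos → S) : ℚ≥0 :=
  if h : ∃ m : ℚ≥0, IsGreatest {r : ℚ≥0 | ∃ hr : 0 < r, f ⟨r, hr⟩ ≠ g ⟨r, hr⟩} m
  then h.choose else 0


/-- `\bar{\bar{V}}_S`: functions `ℚ^{>0} → S` such that every nonempty subset of the
support has a greatest element. -/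
def VSbb (S : Type*) (s₀ : S) : Type _ :=
  {f : Qpos → S //
    ∀ t : Set Qpos, t ⊆ VSupp s₀ f → t.Nonempty → ∃ m ∈ t, ∀ x ∈ t, x ≤ m}

lemma qdist_eq_of_isGreatest {S : Type*} (f g : Qpos → S) {m : ℚ≥0}
    (h : IsGreatest {r : ℚ≥0 | ∃ hr : 0 < r, f ⟨r, hr⟩ ≠ g ⟨r, hr⟩} m) :
    qdist f g = m := by
  unfold qdist
  split
  · next h' => exact h'.choose_spec.unique h
  · next h' => exact absurd ⟨m, h⟩ h'

lemma qdist_lt_of_bound {S : Type*} (f g : Qpos → S) {m : ℚ≥0} (hm : 0 < m)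
    (h : ∀ r : ℚ≥0, (∃ hr : 0 < r, f ⟨r, hr⟩ ≠ g ⟨r, hr⟩) → r < m) :
    qdist f g < m := by
  unfold qdist
  split
  · next h' => exact h _ h'.choose_spec.1
  · exact hm

lemma exists_greatest_union {α : Type*} [LinearOrder α] {A B : Set α}
    (hA : A.Nonempty → ∃ m ∈ A, ∀ x ∈ A, x ≤ m)
    (hB : B.Nonempty → ∃ m ∈ B, ∀ x ∈ B, x ≤ m)
    (h : (A ∪ B).Nonempty) : ∃ m ∈ A ∪ B, ∀ x ∈ A ∪ B, x ≤ m := by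
  by_cases hAne : A.Nonempty
  · obtain ⟨a, ha, haub⟩ := hA hAne
    by_cases hBne : B.Nonempty
    · obtain ⟨b, hb, hbub⟩ := hB hBne
      refine ⟨max a b, ?_, ?_⟩
      · rcases le_total a b with hle | hle
        · rw [max_eq_right hle]; exact Or.inr hb
        · rw [max_eq_left hle]; exact Or.inl ha
      · rintro x (hx | hx)
        · exact le_trans (haub x hx) (le_max_left _ _)
        · exact le_trans (hbub x hx) (le_max_right _ _)
    · refine ⟨a, Or.inl ha, ?_⟩
      rintro x (hx | hx)
      · exact haub x hx
      · exact absurd ⟨x, hx⟩ hBne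
  · obtain ⟨b, hb, hbub⟩ := hB (by
      rcases h with ⟨x, hx | hx⟩
      · exact absurd ⟨x, hx⟩ hAne
      · exact ⟨x, hx⟩)
    refine ⟨b, Or.inr hb, ?_⟩
    rintro x (hx | hx)
    · exact absurd ⟨x, hx⟩ hAne
    · exact hbub x hx

lemma finite_exists_greatest {α : Type*} [LinearOrder α] {A : Set α}
    (hA : A.Finite) (hne : A.Nonempty) : ∃ m ∈ A, ∀ x ∈ A, x ≤ m := by
  classical
  have hne' : hA.toFinset.Nonempty := by
    rwa [Set.Finite.toFinset_nonempty]
  refine ⟨hA.toFinset.max' hne', ?_, ?_⟩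
  · exact hA.mem_toFinset.mp (hA.toFinset.max'_mem hne')
  · intro x hx
    exact hA.toFinset.le_max' x (hA.mem_toFinset.mpr hx)

/-- `\bar{\bar{V}}_S` is an immediate extension of `V_S`: for every
`g ∈ \bar{\bar{V}}_S \ V_S` (i.e. with infinite support) and every `f ∈ V_S` there is
`f' ∈ V_S` strictly closer to `g`. -/
theorem stmt16 {S : Type*} (s₀ : S)
    (g : VSbb S s₀) (hg : ¬ (VSupp s₀ g.1).Finite) (f : VS S s₀) :
    ∃ f' : VS S s₀, qdist f'.1 g.1 < qdist f.1 g.1 := by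
  classical
  set D : Set Qpos := {p | f.1 p ≠ g.1 p} with hDdef
  -- D is nonempty
  have hsub : VSupp s₀ g.1 \ VSupp s₀ f.1 ⊆ D := by
    rintro p ⟨hpg, hpf⟩
    simp only [VSupp, Set.mem_setOf_eq, not_not] at hpg hpf
    simp only [hDdef, Set.mem_setOf_eq, hpf]
    exact fun h => hpg h.symm
  have hDne : D.Nonempty := by
    have : (VSupp s₀ g.1 \ VSupp s₀ f.1).Infinite :=
      (Set.Infinite.diff (fun h => hg h) f.2)
    exact this.nonempty.mono hsub
  -- decompose D
  have hDeq : D = (D ∩ VSupp s₀ f.1) ∪ (D ∩ VSupp s₀ g.1) := by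
    ext p
    constructor
    · intro hp
      by_cases hpg : g.1 p = s₀
      · left
        refine ⟨hp, ?_⟩
        simp only [VSupp, Set.mem_setOf_eq]
        intro h
        exact hp (h.trans hpg.symm)
      · exact Or.inr ⟨hp, hpg⟩
    · rintro (⟨hp, _⟩ | ⟨hp, _⟩) <;> exact hp
  -- D has a greatest element m
  have hDg : ∃ m ∈ D, ∀ x ∈ D, x ≤ m := by
    rw [hDeq]
    refine exists_greatest_union ?_ ?_ (hDeq ▸ hDne)
    · exact fun hne => finite_exists_greatest (f.2.subset Set.inter_subset_right) hne
    · exact fun hne => g.2 _ Set.inter_subset_right hne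
  obtain ⟨m, hmD, hmub⟩ := hDg
  -- qdist f g = m
  have hqd : qdist f.1 g.1 = m.1 := by
    refine qdist_eq_of_isGreatest _ _ ⟨⟨m.2, hmD⟩, ?_⟩
    rintro r ⟨hr, hne⟩
    exact Subtype.coe_le_coe.mpr (hmub ⟨r, hr⟩ hne)
  -- define f'
  set f'fun : Qpos → S := fun p => if p = m then g.1 p else f.1 p with hf'def
  have hf'fin : (VSupp s₀ f'fun).Finite := by
    refine (f.2.union (Set.finite_singleton m)).subset ?_
    intro p hp
    simp only [VSupp, Set.mem_setOf_eq, hf'def] at hp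
    by_cases hpm : p = m
    · exact Or.inr hpm
    · rw [if_neg hpm] at hp
      exact Or.inl hp
  refine ⟨⟨f'fun, hf'fin⟩, ?_⟩
  rw [hqd]
  refine qdist_lt_of_bound _ _ m.2 ?_
  rintro r ⟨hr, hne⟩
  simp only [hf'def] at hne
  by_cases hpm : (⟨r, hr⟩ : Qpos) = m
  · rw [if_pos hpm] at hne
    exact absurd rfl hne
  · rw [if_neg hpm] at hne
    have hle : (⟨r, hr⟩ : Qpos) ≤ m := hmub ⟨r, hr⟩ hne
    exact lt_of_le_of_ne hle (fun h => hpm (Subtype.ext h))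

end
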